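/- Assume f satisfies (f_reg), (f_eq), (f_0), and that F_∞ := lim_{s→∞} F̂(s) is finite. Then every solution u of the Cauchy problem with datum d > 0 on [R1,R2] satisfies |u'(r)|^p/p' ≤ max{F̂(0), F_∞} and |u(r) - d| ≤ (p' · max{F̂(0), F_∞})^{1/p} · (R2 - R1) for every r ∈ [R1,R2]. Consequently, for every M > 0 there exists D > 0 such that for every d ≥ D, every solution u of the Cauchy problem with datum d, and every r ∈ [R1, r1], one has u(r) + |u'(r)| ≥ M. -/

import Mathlib

open Real Set Filter Topology

noncomputable def phip (p s : ℝ) : ℝ := |s| ^ (p - 2) * s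

def Freg (f : ℝ → ℝ) : Prop :=
  ContinuousOn f (Ici 0) ∧ ContDiffOn ℝ 1 f (Ioi 0)

def Feq (f : ℝ → ℝ) : Prop :=
  f 0 = 0 ∧ f 1 = 0 ∧ (∀ s : ℝ, 0 < s → s < 1 → f s < 0) ∧ (∀ s : ℝ, 1 < s → 0 < f s)

def Fzero (p : ℝ) (f : ℝ → ℝ) : Prop :=
  ∃ c : ℝ, ∀ᶠ s in 𝓝[>] (0:ℝ), c ≤ f s / s ^ (p - 1)

noncomputable def pstar (p : ℝ) (N : ℕ) : EReal :=
  if p < (N:ℝ) then (((N:ℝ) * p / ((N:ℝ) - p) : ℝ) : EReal) else ⊤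

noncomputable def fstar (f : ℝ → ℝ) (s : ℝ) : ℝ := sSup (f '' Icc 1 s)

noncomputable def Fint (f : ℝ → ℝ) (s : ℝ) : ℝ := ∫ σ in (1:ℝ)..s, f σ

def Fsubl (p : ℝ) (f : ℝ → ℝ) : Prop :=
  ∃ M : ℝ, 0 < M ∧ ∀ ε > 0, ∀ᶠ s in atTop, f s / s ^ (p - 1) ≤ M + ε

def FsubcWith (p : ℝ) (N : ℕ) (f : ℝ → ℝ) (η : ℝ) : Prop :=
  (∀ c : ℝ, ∃ᶠ s in atTop, c < f s / s ^ (p - 1)) ∧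
  0 < η ∧ η < 1 ∧
  ∃ L : ℝ, (L : EReal) < pstar p N ∧
    ∀ᶠ s in atTop, fstar f s * s / Fint f (η * s) ≤ L

def Fsubc (p : ℝ) (N : ℕ) (f : ℝ → ℝ) : Prop := ∃ η : ℝ, FsubcWith p N f η

/-- A radial solution of the Neumann problem on `[R1,R2]`. -/
def NeumannSol (p : ℝ) (N : ℕ) (R1 R2 : ℝ) (f u : ℝ → ℝ) : Prop :=
  (∀ x ∈ Icc R1 R2, DifferentiableAt ℝ u x) ∧
  ContinuousOn (deriv u) (Icc R1 R2) ∧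
  (∀ x ∈ Icc R1 R2, 0 < u x) ∧
  deriv u R1 = 0 ∧ deriv u R2 = 0 ∧
  ContinuousOn (fun x => x ^ (N - 1) * phip p (deriv u x)) (Icc R1 R2) ∧
  ∀ x ∈ Ioc R1 R2,
    HasDerivAt (fun t => t ^ (N - 1) * phip p (deriv u t)) (-(x ^ (N - 1)) * f (u x)) x

noncomputable def fhat (f : ℝ → ℝ) (s : ℝ) : ℝ := if 0 ≤ s then f s else 0

noncomputable def Fhat (f : ℝ → ℝ) (s : ℝ) : ℝ := ∫ σ in (1:ℝ)..s, fhat f σ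

/-- A solution of the Cauchy problem with datum `d`, for the nonlinearity `g`. -/
def CauchySol (p : ℝ) (N : ℕ) (R1 R2 : ℝ) (g u : ℝ → ℝ) (d : ℝ) : Prop :=
  (∀ x ∈ Icc R1 R2, DifferentiableAt ℝ u x) ∧
  ContinuousOn (deriv u) (Icc R1 R2) ∧
  u R1 = d ∧ deriv u R1 = 0 ∧
  ContinuousOn (fun x => x ^ (N - 1) * phip p (deriv u x)) (Icc R1 R2) ∧
  ∀ x ∈ Ioc R1 R2,
    HasDerivAt (fun t => t ^ (N - 1) * phip p (deriv u t)) (-(x ^ (N - 1)) * g (u x)) x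

noncomputable def rOne (R1 R2 : ℝ) (u : ℝ → ℝ) : ℝ :=
  sSup {x | x ∈ Icc R1 R2 ∧ ∀ s ∈ Ico R1 x, 0 < u s}

noncomputable def rZero (R2 η d : ℝ) (u : ℝ → ℝ) : ℝ :=
  sSup {x | x ∈ Icc 0 R2 ∧ ∀ s ∈ Ico 0 x, η * d < u s}

noncomputable def energy (p : ℝ) (f u : ℝ → ℝ) (x : ℝ) : ℝ :=
  |deriv u x| ^ p / (p / (p - 1)) + Fhat f (u x)

def NonConstOn (R1 R2 : ℝ) (u : ℝ → ℝ) : Prop :=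
  ∃ x ∈ Icc R1 R2, ∃ x' ∈ Icc R1 R2, u x ≠ u x'

def DistinctOn (R1 R2 : ℝ) (u v : ℝ → ℝ) : Prop :=
  ∃ x ∈ Icc R1 R2, u x ≠ v x

noncomputable def nOverPstar (p : ℝ) (N : ℕ) : ℝ :=
  if p < (N:ℝ) then ((N:ℝ) - p) / p else 0




lemma rpow_split (a q : ℝ) (ha : 0 < a) : a ^ q = a ^ (q-1) * a := by
  have h := Real.rpow_add ha (q-1) 1
  simpa [Real.rpow_one] using h

lemma abs_rpow_split (q : ℝ) (hq : 1 < q) (t : ℝ) : |t| ^ q = |t| ^ (q-1) * |t| := by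
  rcases eq_or_ne t 0 with rfl | ht
  · simp [Real.zero_rpow (by linarith : q ≠ 0),
      Real.zero_rpow (by intro h; rw [sub_eq_zero] at h; linarith : q - 1 ≠ (0:ℝ))]
  · exact rpow_split _ q (abs_pos.2 ht)

lemma aux_abs_rpow_hasDerivAt (q : ℝ) (hq : 1 < q) (s : ℝ) :
    HasDerivAt (fun t : ℝ => |t| ^ q) (q * |s| ^ (q-2) * s) s := by
  rcases lt_trichotomy s 0 with hs | rfl | hs
  · have h1 : HasDerivAt (fun t : ℝ => (-t) ^ q) (q * (-s) ^ (q - 1) * (-1)) s :=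
      (Real.hasDerivAt_rpow_const (p := q) (Or.inl (by linarith : -s ≠ 0))).comp s (hasDerivAt_neg s)
    have h2 : (fun t : ℝ => |t| ^ q) =ᶠ[𝓝 s] fun t => (-t) ^ q := by
      filter_upwards [Iio_mem_nhds hs] with t ht
      rw [abs_of_neg ht]
    have h3 : q * (-s) ^ (q - 1) * (-1) = q * |s| ^ (q-2) * s := by
      rw [abs_of_neg hs, rpow_split (-s) (q-1) (by linarith)]
      have : (q:ℝ) - 1 - 1 = q - 2 := by ring
      rw [this]; ring
    exact h3 ▸ h1.congr_of_eventuallyEq h2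
  · have h0 : q * |(0:ℝ)| ^ (q-2) * 0 = 0 := by ring
    rw [h0, hasDerivAt_iff_isLittleO]
    simp only [sub_zero, smul_zero, abs_zero, Real.zero_rpow (by linarith : q ≠ (0:ℝ)), sub_zero]
    rw [Asymptotics.isLittleO_iff]
    intro c hc
    have htend : Tendsto (fun t : ℝ => |t| ^ (q-1)) (𝓝 0) (𝓝 0) := by
      have : ContinuousAt (fun t : ℝ => |t| ^ (q-1)) 0 :=
        (Real.continuousAt_rpow_const _ _ (Or.inr (by linarith))).comp continuous_abs.continuousAt
      simpa [Real.zero_rpow (by intro h; rw [sub_eq_zero] at h; linarith : q - 1 ≠ (0:ℝ))] using this.tendsto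
    filter_upwards [htend.eventually_le_const hc] with t ht
    rw [Real.norm_eq_abs, abs_of_nonneg (Real.rpow_nonneg (abs_nonneg t) q), abs_rpow_split q hq t,
      Real.norm_eq_abs]
    exact mul_le_mul_of_nonneg_right ht (abs_nonneg t)
  · have h1 : HasDerivAt (fun t : ℝ => t ^ q) (q * s ^ (q - 1)) s :=
      Real.hasDerivAt_rpow_const (Or.inl hs.ne')
    have h2 : (fun t : ℝ => |t| ^ q) =ᶠ[𝓝 s] fun t => t ^ q := by
      filter_upwards [Ioi_mem_nhds hs] with t ht
      rw [abs_of_pos ht]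
    have h3 : q * s ^ (q - 1) = q * |s| ^ (q-2) * s := by
      rw [abs_of_pos hs, rpow_split s (q-1) hs]
      have : (q:ℝ) - 1 - 1 = q - 2 := by ring
      rw [this]; ring
    exact h3 ▸ h1.congr_of_eventuallyEq h2

lemma abs_phip (p : ℝ) (hp : 1 < p) (s : ℝ) : |phip p s| = |s| ^ (p - 1) := by
  rw [phip, abs_mul, abs_of_nonneg (Real.rpow_nonneg (abs_nonneg s) _)]
  rcases eq_or_ne s 0 with rfl | hs
  · simp [Real.zero_rpow (by intro h; rw [sub_eq_zero] at h; linarith : p - 1 ≠ (0:ℝ))]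
  · rw [rpow_split _ (p-1) (abs_pos.2 hs)]
    have : (p:ℝ) - 1 - 1 = p - 2 := by ring
    rw [this]

lemma aux_phip_inv (p : ℝ) (hp : 1 < p) (s : ℝ) : phip (p/(p-1)) (phip p s) = s := by
  have hp1 : (0:ℝ) < p - 1 := by linarith
  rcases eq_or_ne s 0 with rfl | hs
  · simp [phip]
  · have hsa : (0:ℝ) < |s| := abs_pos.2 hs
    rw [phip, abs_phip p hp s, ← Real.rpow_mul (abs_nonneg s)]
    have he : (p-1)*(p/(p-1)-2) = 2-p := by field_simp; ring
    rw [he, phip, ← mul_assoc, ← Real.rpow_add hsa]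
    norm_num

lemma aux_abs_phip_rpow (p : ℝ) (hp : 1 < p) (s : ℝ) :
    |phip p s| ^ (p/(p-1)) = |s| ^ p := by
  have hp1 : (0:ℝ) < p - 1 := by linarith
  rcases eq_or_ne s 0 with rfl | hs
  · have h1 : (p/(p-1)) ≠ 0 := by positivity
    have h2 : p ≠ 0 := by positivity
    simp [phip, Real.zero_rpow h1, Real.zero_rpow h2]
  · rw [abs_phip p hp s, ← Real.rpow_mul (abs_nonneg s)]
    congr 1
    field_simp

lemma fhat_continuous (f : ℝ → ℝ) (hreg : ContinuousOn f (Ici 0)) (hf0 : f 0 = 0) :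
    Continuous (fhat f) := by
  have h : fhat f = fun s => f (max s 0) := by
    funext s
    by_cases h : 0 ≤ s
    · simp [fhat, h, max_eq_left h]
    · simp [fhat, h, max_eq_right (le_of_lt (not_le.1 h)), hf0]
  rw [h]
  exact hreg.comp_continuous (continuous_id.max continuous_const) (fun s => mem_Ici.2 (le_max_right _ _))

lemma Fhat_hasDerivAt (f : ℝ → ℝ) (hc : Continuous (fhat f)) (x : ℝ) :
    HasDerivAt (Fhat f) (fhat f x) x :=
  intervalIntegral.integral_hasDerivAt_right (hc.intervalIntegrable 1 x)
    (hc.stronglyMeasurableAtFilter _ _) hc.continuousAt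

lemma Fhat_anti (f : ℝ → ℝ) (hc : Continuous (fhat f))
    (hneg : ∀ s : ℝ, 0 < s → s < 1 → f s < 0) (hf0 : f 0 = 0) (hf1 : f 1 = 0) :
    AntitoneOn (Fhat f) (Iic 1) := by
  apply antitoneOn_of_deriv_nonpos (convex_Iic 1)
  · exact fun x _ => (Fhat_hasDerivAt f hc x).continuousAt.continuousWithinAt
  · exact fun x _ => (Fhat_hasDerivAt f hc x).differentiableAt.differentiableWithinAt
  · intro x hx
    rw [interior_Iic] at hx
    rw [(Fhat_hasDerivAt f hc x).deriv]
    rcases lt_or_ge x 0 with h | h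
    · simp [fhat, not_le.2 h]
    · rcases eq_or_lt_of_le h with rfl | h'
      · simp [fhat, hf0]
      · simp only [fhat, h, if_true]
        exact le_of_lt (hneg x h' hx)

lemma Fhat_mono (f : ℝ → ℝ) (hc : Continuous (fhat f))
    (hpos : ∀ s : ℝ, 1 < s → 0 < f s) :
    MonotoneOn (Fhat f) (Ici 1) := by
  apply monotoneOn_of_deriv_nonneg (convex_Ici 1)
  · exact fun x _ => (Fhat_hasDerivAt f hc x).continuousAt.continuousWithinAt
  · exact fun x _ => (Fhat_hasDerivAt f hc x).differentiableAt.differentiableWithinAt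
  · intro x hx
    rw [interior_Ici] at hx
    rw [(Fhat_hasDerivAt f hc x).deriv]
    simp only [fhat, (by linarith [mem_Ioi.1 hx] : (0:ℝ) ≤ x), if_true]
    exact le_of_lt (hpos x hx)

lemma Fhat_one (f : ℝ → ℝ) : Fhat f 1 = 0 := intervalIntegral.integral_same

lemma Fhat_nonneg (f : ℝ → ℝ) (hc : Continuous (fhat f))
    (hneg : ∀ s : ℝ, 0 < s → s < 1 → f s < 0) (hf0 : f 0 = 0) (hf1 : f 1 = 0)
    (hpos : ∀ s : ℝ, 1 < s → 0 < f s) (s : ℝ) : 0 ≤ Fhat f s := by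
  rcases le_total s 1 with h | h
  · have := Fhat_anti f hc hneg hf0 hf1 h (le_refl (1:ℝ)) h
    rwa [Fhat_one] at this
  · have := Fhat_mono f hc hpos (le_refl (1:ℝ)) h h
    rwa [Fhat_one] at this

lemma alg_bound (n : ℕ) (x a w0 F : ℝ) (hx : 0 < x) (hw0 : 0 ≤ a * w0) :
    a * (((-(x^n) * F) * x^n - (x^n * w0) * ((n:ℝ) * x^(n-1))) / (x^n)^2) + F * a ≤ 0 := by
  obtain _ | m := n
  · simp only [pow_zero, Nat.cast_zero, zero_mul, mul_zero, sub_zero, one_pow, div_one]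
    nlinarith []
  · have hxn : x ^ (m+1) ≠ 0 := pow_ne_zero _ hx.ne'
    have key : a * (((-(x^(m+1)) * F) * x^(m+1) - (x^(m+1) * w0) * (((m+1:ℕ):ℝ) * x^(m+1-1))) / (x^(m+1))^2) + F * a
        = -((((m+1:ℕ):ℝ)) * (a * w0)) / x := by
      have h1 : (m+1) - 1 = m := rfl
      rw [h1]
      field_simp
      ring
    rw [key]
    apply div_nonpos_of_nonpos_of_nonneg _ hx.le
    have : (0:ℝ) ≤ ((m+1:ℕ):ℝ) * (a * w0) := mul_nonneg (Nat.cast_nonneg _) hw0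
    linarith

theorem stmt10 (p : ℝ) (hp : 1 < p) (N : ℕ) (hN : 1 ≤ N)
    (R1 R2 : ℝ) (hR1 : 0 ≤ R1) (hR12 : R1 < R2)
    (f : ℝ → ℝ) (hreg : Freg f) (heq : Feq f) (h0 : Fzero p f)
    (Finf : ℝ) (hF : Tendsto (Fhat f) atTop (𝓝 Finf)) :
    (∀ d : ℝ, 0 < d → ∀ u : ℝ → ℝ, CauchySol p N R1 R2 (fhat f) u d →
      ∀ x ∈ Icc R1 R2,
        |deriv u x| ^ p / (p / (p - 1)) ≤ max (Fhat f 0) Finf ∧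
        |u x - d| ≤ ((p / (p - 1)) * max (Fhat f 0) Finf) ^ (1 / p) * (R2 - R1)) ∧
    (∀ M : ℝ, 0 < M → ∃ D : ℝ, 0 < D ∧ ∀ d : ℝ, D ≤ d →
      ∀ u : ℝ → ℝ, CauchySol p N R1 R2 (fhat f) u d →
        ∀ x ∈ Icc R1 (rOne R1 R2 u), M ≤ u x + |deriv u x|) := by
  obtain ⟨hf0, hf1, hneg, hpos⟩ := heq
  have hfc : Continuous (fhat f) := fhat_continuous f hreg.1 hf0
  have hFnn : ∀ s : ℝ, 0 ≤ Fhat f s := Fhat_nonneg f hfc hneg hf0 hf1 hpos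
  set q : ℝ := p / (p - 1) with hq_def
  have hp1 : (0:ℝ) < p - 1 := by linarith
  have hq1 : 1 < q := by
    rw [hq_def, lt_div_iff₀ hp1]; linarith
  have hq0 : (0:ℝ) < q := lt_trans zero_lt_one hq1
  have hp0 : (0:ℝ) < p := by linarith
  set Mx : ℝ := max (Fhat f 0) Finf with hMx_def
  have hMx0 : 0 ≤ Mx := le_trans (hFnn 0) (le_max_left _ _)
  have hFle : ∀ d : ℝ, 0 < d → Fhat f d ≤ Mx := by
    intro d hd
    rcases le_total d 1 with h | h
    · exact le_trans (Fhat_anti f hfc hneg hf0 hf1 (mem_Iic.2 zero_le_one)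
        (mem_Iic.2 h) hd.le) (le_max_left _ _)
    · refine le_trans ?_ (le_max_right _ _)
      apply ge_of_tendsto hF
      filter_upwards [eventually_ge_atTop d] with s hs
      exact Fhat_mono f hfc hpos (mem_Ici.2 h) (mem_Ici.2 (le_trans h hs)) hs
  -- Part 1
  have part1 : ∀ d : ℝ, 0 < d → ∀ u : ℝ → ℝ, CauchySol p N R1 R2 (fhat f) u d →
      ∀ x ∈ Icc R1 R2,
        |deriv u x| ^ p / q ≤ Mx ∧
        |u x - d| ≤ (q * Mx) ^ (1 / p) * (R2 - R1) := by
    intro d hd u hu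
    obtain ⟨hdiff, hdc, huR1, hu'R1, hvc, hode⟩ := hu
    set H : ℝ → ℝ := fun t => |deriv u t| ^ p / q + Fhat f (u t) with hH_def
    have hFhatDiff : Differentiable ℝ (Fhat f) :=
      fun y => (Fhat_hasDerivAt f hfc y).differentiableAt
    have hHcont : ContinuousOn H (Icc R1 R2) := by
      apply ContinuousOn.add
      · exact (hdc.abs.rpow_const (fun y _ => Or.inr hp0.le)).div_const q
      · exact hFhatDiff.continuous.comp_continuousOn
          (fun y hy => (hdiff y hy).continuousAt.continuousWithinAt)
    have hHeq : H = fun t => |phip p (deriv u t)| ^ q / q + Fhat f (u t) := by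
      funext t
      rw [hH_def]
      simp only [hq_def, aux_abs_phip_rpow p hp (deriv u t)]
    have hHderiv : ∀ x ∈ Ioo R1 R2, HasDerivAt H
        ((q * |phip p (deriv u x)| ^ (q-2) * phip p (deriv u x) *
          (((-(x^(N-1)) * fhat f (u x)) * x^(N-1) -
            (x^(N-1) * phip p (deriv u x)) * (((N-1:ℕ):ℝ) * x^(N-1-1))) / (x^(N-1))^2)) / q
          + fhat f (u x) * deriv u x) x := by
      intro x hx
      have hx0 : 0 < x := lt_of_le_of_lt hR1 hx.1
      have hxmem : x ∈ Icc R1 R2 := ⟨hx.1.le, hx.2.le⟩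
      have hv : HasDerivAt (fun t => t^(N-1) * phip p (deriv u t))
          (-(x^(N-1)) * fhat f (u x)) x := hode x ⟨hx.1, hx.2.le⟩
      have hg : HasDerivAt (fun t : ℝ => t^(N-1)) (((N-1:ℕ):ℝ) * x^(N-1-1)) x :=
        hasDerivAt_pow (N-1) x
      have hgx : x^(N-1) ≠ 0 := pow_ne_zero _ hx0.ne'
      have hwdiv : HasDerivAt (fun t => (t^(N-1) * phip p (deriv u t)) / t^(N-1))
          (((-(x^(N-1)) * fhat f (u x)) * x^(N-1) -
            (x^(N-1) * phip p (deriv u x)) * (((N-1:ℕ):ℝ) * x^(N-1-1))) / (x^(N-1))^2) x :=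
        hv.div hg hgx
      have hweq : (fun t => phip p (deriv u t)) =ᶠ[𝓝 x]
          fun t => (t^(N-1) * phip p (deriv u t)) / t^(N-1) := by
        filter_upwards [Ioi_mem_nhds hx0] with t ht
        rw [mul_div_cancel_left₀ _ (pow_ne_zero _ (ne_of_gt ht))]
      have hw : HasDerivAt (fun t => phip p (deriv u t))
          (((-(x^(N-1)) * fhat f (u x)) * x^(N-1) -
            (x^(N-1) * phip p (deriv u x)) * (((N-1:ℕ):ℝ) * x^(N-1-1))) / (x^(N-1))^2) x :=
        hwdiv.congr_of_eventuallyEq hweq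
      have h1 : HasDerivAt (fun y : ℝ => |y| ^ q)
          (q * |phip p (deriv u x)| ^ (q-2) * phip p (deriv u x)) (phip p (deriv u x)) :=
        aux_abs_rpow_hasDerivAt q hq1 _
      have h2 := (h1.comp x hw).div_const q
      have h4 : HasDerivAt (fun t => Fhat f (u t)) (fhat f (u x) * deriv u x) x :=
        (Fhat_hasDerivAt f hfc (u x)).comp x (hdiff x hxmem).hasDerivAt
      rw [hHeq]
      exact h2.add h4
    have hHd_le : ∀ x ∈ Ioo R1 R2, deriv H x ≤ 0 := by
      intro x hx
      have hx0 : 0 < x := lt_of_le_of_lt hR1 hx.1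
      rw [(hHderiv x hx).deriv]
      have hphiq : |phip p (deriv u x)| ^ (q-2) * phip p (deriv u x) = deriv u x := by
        have := aux_phip_inv p hp (deriv u x)
        rwa [phip] at this
      rw [mul_assoc q, hphiq]
      have hcancel : ∀ w' : ℝ, (q * deriv u x * w') / q = deriv u x * w' := by
        intro w'
        rw [mul_assoc]
        exact mul_div_cancel_left₀ _ (ne_of_gt hq0)
      rw [hcancel]
      have hw0 : 0 ≤ deriv u x * phip p (deriv u x) := by
        rw [phip]
        have : deriv u x * (|deriv u x| ^ (p-2) * deriv u x)
            = |deriv u x| ^ (p-2) * (deriv u x * deriv u x) := by ring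
        rw [this]
        exact mul_nonneg (Real.rpow_nonneg (abs_nonneg _) _) (mul_self_nonneg _)
      exact alg_bound (N-1) x (deriv u x) (phip p (deriv u x)) (fhat f (u x)) hx0 hw0
    have hanti : AntitoneOn H (Icc R1 R2) := by
      apply antitoneOn_of_deriv_nonpos (convex_Icc R1 R2) hHcont
      · intro x hx
        rw [interior_Icc] at hx
        exact (hHderiv x hx).differentiableAt.differentiableWithinAt
      · intro x hx
        rw [interior_Icc] at hx
        exact hHd_le x hx
    have hHR1 : H R1 = Fhat f d := by
      rw [hH_def]
      simp only [hu'R1, huR1, abs_zero, Real.zero_rpow (ne_of_gt hp0), zero_div, zero_add]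
    have hmain : ∀ x ∈ Icc R1 R2, |deriv u x| ^ p / q ≤ Mx := by
      intro x hx
      have h := hanti (left_mem_Icc.2 hR12.le) hx hx.1
      rw [hHR1] at h
      have h2 := hFle d hd
      have h3 := hFnn (u x)
      have : H x = |deriv u x| ^ p / q + Fhat f (u x) := rfl
      linarith [this ▸ h]
    intro x hx
    refine ⟨hmain x hx, ?_⟩
    have hC0 : (0:ℝ) ≤ (q * Mx) ^ (1/p) := Real.rpow_nonneg (by positivity) _
    have hbound : ∀ y ∈ Icc R1 R2, ‖deriv u y‖ ≤ (q * Mx) ^ (1/p) := by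
      intro y hy
      have h := hmain y hy
      have h2 : |deriv u y| ^ p ≤ q * Mx := by
        rw [div_le_iff₀ hq0] at h
        calc |deriv u y| ^ p ≤ Mx * q := h
        _ = q * Mx := mul_comm _ _
      have h3 : (|deriv u y| ^ p) ^ (1/p) ≤ (q * Mx) ^ (1/p) :=
        Real.rpow_le_rpow (Real.rpow_nonneg (abs_nonneg _) _) h2 (by positivity)
      rwa [← Real.rpow_mul (abs_nonneg _), mul_one_div_cancel (ne_of_gt hp0),
        Real.rpow_one, ← Real.norm_eq_abs] at h3
    have := Convex.norm_image_sub_le_of_norm_deriv_le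
      (fun y hy => hdiff y hy) hbound (convex_Icc R1 R2) (left_mem_Icc.2 hR12.le) hx
    rw [huR1, Real.norm_eq_abs, Real.norm_eq_abs, abs_of_nonneg (sub_nonneg.2 hx.1)] at this
    exact le_trans this (mul_le_mul_of_nonneg_left (sub_le_sub_right hx.2 R1) hC0)
  constructor
  · exact part1
  · intro M hM
    set C : ℝ := (q * Mx) ^ (1/p) * (R2 - R1) with hC_def
    have hC0 : 0 ≤ C := mul_nonneg (Real.rpow_nonneg (by positivity) _) (by linarith)
    refine ⟨M + C, by linarith, ?_⟩
    intro d hd u hu x hx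
    have hd0 : 0 < d := lt_of_lt_of_le (by linarith) hd
    have hr1 : rOne R1 R2 u ≤ R2 := by
      apply csSup_le
      · exact ⟨R1, ⟨left_mem_Icc.2 hR12.le, fun s hs => absurd hs.2 (not_lt.2 hs.1)⟩⟩
      · exact fun y hy => hy.1.2
    have hxmem : x ∈ Icc R1 R2 := ⟨hx.1, le_trans hx.2 hr1⟩
    have h := (part1 d hd0 u hu x hxmem).2
    have h2 : d - u x ≤ C := by
      rw [abs_sub_comm] at h
      exact le_trans (le_abs_self _) h
    have h3 : M ≤ u x := by linarith
    have h4 : 0 ≤ |deriv u x| := abs_nonneg _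
    linarith
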